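/- Let n = 2k+1 with k ≥ 1 and let 1 ≤ r ≤ k. The eigenspace of the adjacency matrix of the middle-cube M_n for the eigenvalue k+1−r is exactly the set of vectors (f(A))_A indexed by the vertices A of M_n, where f(A) = ∑_{B ⊆ A, |B| = r} g(B) and g ranges over all assignments of real numbers to the r-subsets of S satisfying: for every (r−1)-subset R of S, ∑_{i ∈ S∖R} g(R ∪ {i}) = 0. In particular this eigenspace has dimension C(n, r) − C(n, r−1). -/

import Mathlib

open Finset

/-- Vertices of the middle-cube `M_n` (with `n = 2k+1`): subsets of `S = {1,…,n}`
(modeled as `Fin n`) of cardinality `k` or `k+1`. -/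
abbrev MidVert (n k : ℕ) := {A : Finset (Fin n) // A.card = k ∨ A.card = k + 1}

/-- Adjacency matrix of the middle-cube: two distinct vertices `A`, `B` are adjacent
iff `A ⊂ B` or `B ⊂ A`. -/
def midAdj (n k : ℕ) : Matrix (MidVert n k) (MidVert n k) ℝ :=
  fun A B => if A.1 ⊂ B.1 ∨ B.1 ⊂ A.1 then 1 else 0

namespace MC

variable {n : ℕ}

/-- Down operator. -/
def dn (g : Finset (Fin n) → ℝ) (R : Finset (Fin n)) : ℝ := ∑ i ∈ Rᶜ, g (insert i R)

/-- Up operator. -/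
def upf (g : Finset (Fin n) → ℝ) (A : Finset (Fin n)) : ℝ := ∑ j ∈ A, g (A.erase j)

/-- Full up from level r. -/
def ful (r : ℕ) (g : Finset (Fin n) → ℝ) (A : Finset (Fin n)) : ℝ :=
  ∑ B ∈ A.powersetCard r, g B

/-- Level set. -/
def lvl (n s : ℕ) : Finset (Finset (Fin n)) := univ.filter (fun B => B.card = s)

lemma mem_lvl {s : ℕ} {B : Finset (Fin n)} : B ∈ lvl n s ↔ B.card = s := by
  simp [lvl]

lemma comm_rel (g : Finset (Fin n) → ℝ) (R : Finset (Fin n)) :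
    dn (upf g) R = upf (dn g) R + ((Rᶜ.card : ℝ) - R.card) * g R := by
  have h1 : dn (upf g) R
      = ∑ i ∈ Rᶜ, (g R + ∑ j ∈ R, g (insert i (R.erase j))) := by
    refine Finset.sum_congr rfl fun i hi => ?_
    have hiR : i ∉ R := by simpa using hi
    rw [upf, Finset.sum_insert hiR, erase_insert hiR]
    congr 1
    refine Finset.sum_congr rfl fun j hj => ?_
    rw [erase_insert_of_ne (fun h => hiR (by rw [h]; exact hj))]
  have h2 : upf (dn g) R
      = ∑ j ∈ R, (g R + ∑ i ∈ Rᶜ, g (insert i (R.erase j))) := by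
    refine Finset.sum_congr rfl fun j hj => ?_
    rw [dn, compl_erase, Finset.sum_insert (by simpa using hj), insert_erase hj]
  rw [h1, h2]
  rw [Finset.sum_add_distrib, Finset.sum_add_distrib, Finset.sum_const, Finset.sum_const,
    Finset.sum_comm]
  push_cast
  ring

lemma adj_rel (g f : Finset (Fin n) → ℝ) (s : ℕ) :
    ∑ A ∈ lvl n (s + 1), upf g A * f A = ∑ B ∈ lvl n s, g B * dn f B := by
  have hL : ∑ A ∈ lvl n (s + 1), upf g A * f A
      = ∑ p ∈ (lvl n (s + 1)).sigma (fun A => A), g (p.1.erase p.2) * f p.1 := by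
    rw [Finset.sum_sigma]
    exact Finset.sum_congr rfl fun A _ => by rw [upf, Finset.sum_mul]
  have hR : ∑ B ∈ lvl n s, g B * dn f B
      = ∑ q ∈ (lvl n s).sigma (fun B => Bᶜ), g q.1 * f (insert q.2 q.1) := by
    rw [Finset.sum_sigma]
    exact Finset.sum_congr rfl fun B _ => by rw [dn, Finset.mul_sum]
  rw [hL, hR]
  refine Finset.sum_bij' (fun p _ => ⟨p.1.erase p.2, p.2⟩)
    (fun q _ => ⟨insert q.2 q.1, q.2⟩) ?_ ?_ ?_ ?_ ?_
  · rintro ⟨A, j⟩ hp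
    rw [Finset.mem_sigma] at hp ⊢
    obtain ⟨hA, hj⟩ := hp
    rw [mem_lvl] at hA
    exact ⟨mem_lvl.2 (by rw [card_erase_of_mem hj, hA]; rfl),
      by simpa using notMem_erase j A⟩
  · rintro ⟨B, i⟩ hq
    rw [Finset.mem_sigma] at hq ⊢
    obtain ⟨hB, hi⟩ := hq
    rw [mem_lvl] at hB
    have hiB : i ∉ B := by simpa using hi
    exact ⟨mem_lvl.2 (by rw [card_insert_of_notMem hiB, hB]), mem_insert_self _ _⟩
  · rintro ⟨A, j⟩ hp
    rw [Finset.mem_sigma] at hp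
    simp [insert_erase hp.2]
  · rintro ⟨B, i⟩ hq
    rw [Finset.mem_sigma] at hq
    have hiB : i ∉ B := by simpa using hq.2
    simp [erase_insert hiB]
  · rintro ⟨A, j⟩ hp
    rw [Finset.mem_sigma] at hp
    simp [insert_erase hp.2]

lemma inj_up {s : ℕ} (hs : 2 * s < n) (g : Finset (Fin n) → ℝ)
    (h0 : ∀ A : Finset (Fin n), A.card = s + 1 → upf g A = 0) :
    ∀ B : Finset (Fin n), B.card = s → g B = 0 := by
  have key : ∑ B ∈ lvl n s, g B * dn (upf g) B = 0 := by
    rw [← adj_rel]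
    exact Finset.sum_eq_zero fun A hA => by rw [h0 A (mem_lvl.1 hA), zero_mul]
  have expand : ∀ B ∈ lvl n s,
      g B * dn (upf g) B = g B * upf (dn g) B + ((n : ℝ) - 2 * s) * (g B * g B) := by
    intro B hB
    rw [comm_rel]
    have hBcard : B.card = s := mem_lvl.1 hB
    have hcompl : (Bᶜ.card : ℝ) = (n : ℝ) - s := by
      rw [Finset.card_compl, hBcard, Fintype.card_fin]
      have : s ≤ n := by omega
      push_cast [this]
      ring
    rw [hcompl, hBcard]
    ring
  rw [Finset.sum_congr rfl expand, Finset.sum_add_distrib, ← Finset.mul_sum] at key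
  have hcross : 0 ≤ ∑ B ∈ lvl n s, g B * upf (dn g) B := by
    rcases Nat.eq_zero_or_pos s with hs0 | hs1
    · subst hs0
      refine le_of_eq (Finset.sum_eq_zero fun B hB => ?_).symm
      have : B = ∅ := Finset.card_eq_zero.1 (mem_lvl.1 hB)
      subst this
      simp [upf]
    · have hadj := adj_rel (n := n) (dn g) g (s - 1)
      have hss : s - 1 + 1 = s := by omega
      rw [hss] at hadj
      have h2 : ∑ B ∈ lvl n s, g B * upf (dn g) B
          = ∑ C ∈ lvl n (s - 1), dn g C * dn g C := by
        rw [← hadj]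
        exact Finset.sum_congr rfl fun B _ => mul_comm _ _
      rw [h2]
      exact Finset.sum_nonneg fun C _ => mul_self_nonneg _
  have hpos : (0 : ℝ) < (n : ℝ) - 2 * s := by
    have : (2 * s : ℝ) < n := by exact_mod_cast hs
    linarith
  have hsq : 0 ≤ ∑ B ∈ lvl n s, g B * g B :=
    Finset.sum_nonneg fun B _ => mul_self_nonneg _
  have hzero : ∑ B ∈ lvl n s, g B * g B = 0 := by
    nlinarith
  intro B hB
  have := (Finset.sum_eq_zero_iff_of_nonneg fun B _ => mul_self_nonneg (g B)).1 hzero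
    B (mem_lvl.2 hB)
  nlinarith [this]

lemma up_ful (r : ℕ) (g : Finset (Fin n) → ℝ) (A : Finset (Fin n)) :
    upf (ful r g) A = ((A.card : ℝ) - r) * ful r g A := by
  have step : ∀ j ∈ A, ful r g (A.erase j)
      = ∑ B ∈ A.powersetCard r, if j ∉ B then g B else 0 := by
    intro j hj
    rw [ful, ← Finset.sum_filter]
    congr 1
    ext B
    simp only [mem_powersetCard, Finset.mem_filter, subset_erase]
    tauto
  rw [upf, Finset.sum_congr rfl step, Finset.sum_comm]
  rw [ful, Finset.mul_sum]
  refine Finset.sum_congr rfl fun B hB => ?_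
  obtain ⟨hBA, hBcard⟩ := mem_powersetCard.1 hB
  rw [← Finset.sum_filter, Finset.sum_const, ← Finset.sdiff_eq_filter,
    Finset.card_sdiff_of_subset hBA, hBcard, nsmul_eq_mul]
  have hrA : r ≤ A.card := hBcard ▸ Finset.card_le_card hBA
  congr 1
  push_cast [hrA]
  ring

lemma ful_inj (r : ℕ) : ∀ m : ℕ, ∀ g : Finset (Fin n) → ℝ, 2 * (r + m) < n + 2 →
    (∀ A : Finset (Fin n), A.card = r + m → ful r g A = 0) →
    ∀ B : Finset (Fin n), B.card = r → g B = 0 := by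
  intro m
  induction m with
  | zero =>
    intro g _ h B hB
    have h2 := h B (by omega)
    rw [ful] at h2
    rw [← hB, Finset.powersetCard_self, Finset.sum_singleton] at h2
    exact h2
  | succ m ih =>
    intro g hbound h
    have hup : ∀ A : Finset (Fin n), A.card = (r + m) + 1 → upf (ful r g) A = 0 := by
      intro A hA
      rw [up_ful, h A (by omega), mul_zero]
    have hlow := inj_up (s := r + m) (by omega) (ful r g) hup
    exact ih g (by omega) hlow

lemma dn_ful {r : ℕ} (hr : 1 ≤ r) (g : Finset (Fin n) → ℝ)
    (hg : ∀ R : Finset (Fin n), R.card = r - 1 → dn g R = 0) (A : Finset (Fin n)) :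
    dn (ful r g) A = ((Aᶜ.card : ℝ) - r) * ful r g A := by
  -- step (a): value at insert
  have ha : ∀ i ∈ Aᶜ, ful r g (insert i A)
      = ful r g A + ∑ R ∈ A.powersetCard (r - 1), g (insert i R) := by
    intro i hi
    have hiA : i ∉ A := by simpa using hi
    have hrr : r - 1 + 1 = r := by omega
    rw [ful, ← hrr, powersetCard_succ_insert hiA, Finset.sum_union, Finset.sum_image]
    · rw [Nat.succ_eq_add_one, hrr]; rfl
    · intro R hR R' hR' hins
      have hiR : i ∉ R := fun hmem =>
        hiA ((mem_powersetCard.1 hR).1 hmem)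
      have hiR' : i ∉ R' := fun hmem =>
        hiA ((mem_powersetCard.1 hR').1 hmem)
      rw [← erase_insert hiR, ← erase_insert hiR', hins]
    · rw [Finset.disjoint_right]
      intro B hB hB'
      obtain ⟨R, hR, rfl⟩ := Finset.mem_image.1 hB
      exact hiA ((mem_powersetCard.1 hB').1 (mem_insert_self i R))
  have hb : ∀ R ∈ A.powersetCard (r - 1),
      ∑ i ∈ Aᶜ, g (insert i R) = - ∑ i ∈ A \ R, g (insert i R) := by
    intro R hR
    obtain ⟨hRA, hRcard⟩ := mem_powersetCard.1 hR
    have hsplit : Aᶜ ∪ (A \ R) = Rᶜ := by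
      ext x
      simp only [Finset.mem_union, Finset.mem_compl, Finset.mem_sdiff]
      constructor
      · rintro (hx | ⟨_, hx⟩) hxR
        · exact hx (hRA hxR)
        · exact hx hxR
      · intro hx
        by_cases hxA : x ∈ A
        · exact Or.inr ⟨hxA, by simpa using hx⟩
        · exact Or.inl hxA
    have hdisj : Disjoint Aᶜ (A \ R) := by
      rw [Finset.disjoint_left]
      intro x hx hx'
      exact (Finset.mem_compl.1 hx) (Finset.mem_sdiff.1 hx').1
    have h0 : ∑ i ∈ Rᶜ, g (insert i R) = 0 := hg R hRcard
    rw [← hsplit, Finset.sum_union hdisj] at h0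
    linarith
  -- step (c)
  have hc : ∑ R ∈ A.powersetCard (r - 1), ∑ i ∈ A \ R, g (insert i R)
      = (r : ℝ) * ful r g A := by
    have hL : ∑ R ∈ A.powersetCard (r - 1), ∑ i ∈ A \ R, g (insert i R)
        = ∑ p ∈ (A.powersetCard (r - 1)).sigma (fun R => A \ R), g (insert p.2 p.1) := by
      rw [Finset.sum_sigma]
    have hRR : ∑ B ∈ A.powersetCard r, ∑ i ∈ B, g B
        = ∑ q ∈ (A.powersetCard r).sigma (fun B => B), g q.1 := by
      rw [Finset.sum_sigma]
    have hR2 : (r : ℝ) * ful r g A = ∑ B ∈ A.powersetCard r, ∑ i ∈ B, g B := by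
      rw [ful, Finset.mul_sum]
      refine Finset.sum_congr rfl fun B hB => ?_
      rw [Finset.sum_const, nsmul_eq_mul, (mem_powersetCard.1 hB).2]
    rw [hL, hR2, hRR]
    refine Finset.sum_bij' (fun p _ => (⟨insert p.2 p.1, p.2⟩ : Σ _ : Finset (Fin n), Fin n))
      (fun q _ => ⟨q.1.erase q.2, q.2⟩) ?_ ?_ ?_ ?_ ?_
    · rintro ⟨R, i⟩ hp
      rw [Finset.mem_sigma] at hp ⊢
      obtain ⟨hR, hi⟩ := hp
      obtain ⟨hRA, hRcard⟩ := mem_powersetCard.1 hR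
      obtain ⟨hiA, hiR⟩ := Finset.mem_sdiff.1 hi
      refine ⟨mem_powersetCard.2 ⟨?_, ?_⟩, mem_insert_self _ _⟩
      · exact insert_subset hiA hRA
      · rw [card_insert_of_notMem hiR, hRcard]; omega
    · rintro ⟨B, i⟩ hq
      rw [Finset.mem_sigma] at hq ⊢
      obtain ⟨hB, hi⟩ := hq
      obtain ⟨hBA, hBcard⟩ := mem_powersetCard.1 hB
      refine ⟨mem_powersetCard.2 ⟨(erase_subset _ _).trans hBA, ?_⟩, ?_⟩
      · rw [card_erase_of_mem hi, hBcard]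
      · exact Finset.mem_sdiff.2 ⟨hBA hi, notMem_erase _ _⟩
    · rintro ⟨R, i⟩ hp
      rw [Finset.mem_sigma] at hp
      have hiR : i ∉ R := (Finset.mem_sdiff.1 hp.2).2
      simp [erase_insert hiR]
    · rintro ⟨B, i⟩ hq
      rw [Finset.mem_sigma] at hq
      simp [insert_erase hq.2]
    · rintro ⟨R, i⟩ _
      rfl
  rw [dn, Finset.sum_congr rfl ha, Finset.sum_add_distrib, Finset.sum_const,
    Finset.sum_comm, Finset.sum_congr rfl hb]
  rw [show (∑ x ∈ A.powersetCard (r - 1), -∑ i ∈ A \ x, g (insert i x))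
      = -∑ x ∈ A.powersetCard (r - 1), ∑ i ∈ A \ x, g (insert i x) by
    rw [← Finset.sum_neg_distrib], hc, nsmul_eq_mul]
  ring
abbrev Lv (n s : ℕ) := {B : Finset (Fin n) // B.card = s}

def ext (s : ℕ) (h : Lv n s → ℝ) : Finset (Fin n) → ℝ :=
  fun B => if hB : B.card = s then h ⟨B, hB⟩ else 0

lemma ext_apply (s : ℕ) (h : Lv n s → ℝ) (B : Lv n s) : ext s h B.1 = h B := by
  rw [ext, dif_pos B.2]

lemma sum_subtype_subset (s : ℕ) (h : Lv n s → ℝ) (C : Finset (Fin n)) :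
    ∑ B : Lv n s, (if B.1 ⊆ C then (1 : ℝ) else 0) * h B
      = ∑ B ∈ C.powersetCard s, ext s h B := by
  have h1 : ∑ B : Lv n s, (if B.1 ⊆ C then (1 : ℝ) else 0) * h B
      = ∑ B ∈ (univ : Finset (Lv n s)).filter (fun B => B.1 ⊆ C), h B := by
    rw [Finset.sum_filter]
    exact Finset.sum_congr rfl fun B _ => by rw [boole_mul]
  rw [h1]
  refine Finset.sum_bij (fun B _ => B.1) ?_ ?_ ?_ ?_
  · intro B hB
    exact mem_powersetCard.2 ⟨(Finset.mem_filter.1 hB).2, B.2⟩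
  · intro B₁ _ B₂ _ hEq
    exact Subtype.ext hEq
  · intro B hB
    obtain ⟨hBC, hBcard⟩ := mem_powersetCard.1 hB
    exact ⟨⟨B, hBcard⟩, Finset.mem_filter.2 ⟨Finset.mem_univ _, hBC⟩, rfl⟩
  · intro B _
    exact (ext_apply s h B).symm

lemma sum_subtype_supset (s : ℕ) (h : Lv n (s + 1) → ℝ) (R : Finset (Fin n))
    (hR : R.card = s) :
    ∑ B : Lv n (s + 1), (if R ⊆ B.1 then (1 : ℝ) else 0) * h B
      = ∑ i ∈ Rᶜ, ext (s + 1) h (insert i R) := by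
  have h1 : ∑ B : Lv n (s + 1), (if R ⊆ B.1 then (1 : ℝ) else 0) * h B
      = ∑ B ∈ (univ : Finset (Lv n (s + 1))).filter (fun B => R ⊆ B.1), h B := by
    rw [Finset.sum_filter]
    exact Finset.sum_congr rfl fun B _ => by rw [boole_mul]
  rw [h1]
  refine (Finset.sum_bij (fun (i : Fin n) (hi : i ∈ Rᶜ) =>
    (⟨insert i R, by rw [card_insert_of_notMem (by simpa using hi), hR]⟩ : Lv n (s + 1)))
    ?_ ?_ ?_ ?_).symm
  · intro i _
    exact Finset.mem_filter.2 ⟨Finset.mem_univ _, subset_insert _ _⟩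
  · intro i hi i' hi' hEq
    have hiR : i ∉ R := by simpa using hi
    have hi'R : i' ∉ R := by simpa using hi'
    have h2 : insert i R = insert i' R := congrArg Subtype.val hEq
    have : i ∈ insert i' R := by rw [← h2]; exact mem_insert_self _ _
    rcases Finset.mem_insert.1 this with h | h
    · exact h
    · exact absurd h hiR
  · intro B hB
    have hRB : R ⊆ B.1 := (Finset.mem_filter.1 hB).2
    have hcard : (B.1 \ R).card = 1 := by
      rw [Finset.card_sdiff_of_subset hRB, B.2, hR]; omega
    obtain ⟨i, hi⟩ := Finset.card_eq_one.1 hcard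
    have hiR : i ∈ Rᶜ := by
      have : i ∈ B.1 \ R := hi ▸ Finset.mem_singleton_self i
      exact Finset.mem_compl.2 (Finset.mem_sdiff.1 this).2
    refine ⟨i, hiR, ?_⟩
    apply Subtype.ext
    show insert i R = B.1
    have := Finset.union_sdiff_of_subset hRB
    rw [hi] at this
    rw [Finset.insert_eq, Finset.union_comm]
    exact this
  · intro i hi
    have hc : (insert i R).card = s + 1 := by
      rw [card_insert_of_notMem (by simpa using hi), hR]
    simp only [ext, dif_pos hc]

def extV (k : ℕ) (v : MidVert n k → ℝ) : Finset (Fin n) → ℝ :=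
  fun B => if hB : B.card = k ∨ B.card = k + 1 then v ⟨B, hB⟩ else 0

lemma extV_apply (k : ℕ) (v : MidVert n k → ℝ) (A : MidVert n k) :
    extV k v A.1 = v A := by
  rw [extV, dif_pos A.2]

lemma toLin'_filter (k : ℕ) (v : MidVert n k → ℝ) (A : MidVert n k) :
    Matrix.toLin' (midAdj n k) v A
      = ∑ B ∈ (univ : Finset (MidVert n k)).filter
          (fun B => A.1 ⊂ B.1 ∨ B.1 ⊂ A.1), v B := by
  rw [Matrix.toLin'_apply]
  show ∑ B : MidVert n k, midAdj n k A B * v B = _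
  rw [Finset.sum_filter]
  exact Finset.sum_congr rfl fun B _ => by rw [midAdj, boole_mul]

lemma evalLow (k : ℕ) (v : MidVert n k → ℝ) (A : MidVert n k) (hA : A.1.card = k) :
    Matrix.toLin' (midAdj n k) v A = dn (extV k v) A.1 := by
  rw [toLin'_filter, dn]
  refine (Finset.sum_bij (fun (i : Fin n) (hi : i ∈ A.1ᶜ) =>
    (⟨insert i A.1, Or.inr (by rw [card_insert_of_notMem (by simpa using hi), hA])⟩ :
      MidVert n k)) ?_ ?_ ?_ ?_).symm
  · intro i hi
    refine Finset.mem_filter.2 ⟨Finset.mem_univ _, Or.inl (ssubset_insert (by simpa using hi))⟩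
  · intro i hi i' hi' hEq
    have hiA : i ∉ A.1 := by simpa using hi
    have h2 : insert i A.1 = insert i' A.1 := congrArg Subtype.val hEq
    have : i ∈ insert i' A.1 := by rw [← h2]; exact mem_insert_self _ _
    rcases Finset.mem_insert.1 this with h | h
    · exact h
    · exact absurd h hiA
  · intro B hB
    rcases (Finset.mem_filter.1 hB).2 with hAB | hBA
    · have hcardB : B.1.card = k + 1 := by
        have := Finset.card_lt_card hAB
        rcases B.2 with h | h <;> omega
      have hsub : A.1 ⊆ B.1 := hAB.subset
      have hcard : (B.1 \ A.1).card = 1 := by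
        rw [Finset.card_sdiff_of_subset hsub, hcardB, hA]; omega
      obtain ⟨i, hi⟩ := Finset.card_eq_one.1 hcard
      have hiA : i ∈ A.1ᶜ := by
        have : i ∈ B.1 \ A.1 := hi ▸ Finset.mem_singleton_self i
        exact Finset.mem_compl.2 (Finset.mem_sdiff.1 this).2
      refine ⟨i, hiA, ?_⟩
      apply Subtype.ext
      show insert i A.1 = B.1
      have := Finset.union_sdiff_of_subset hsub
      rw [hi] at this
      rw [Finset.insert_eq, Finset.union_comm]
      exact this
    · exfalso
      have := Finset.card_lt_card hBA
      rcases B.2 with h | h <;> omega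
  · intro i hi
    have hc : (insert i A.1).card = k ∨ (insert i A.1).card = k + 1 :=
      Or.inr (by rw [card_insert_of_notMem (by simpa using hi), hA])
    simp only [extV, dif_pos hc]

lemma evalHigh (k : ℕ) (v : MidVert n k → ℝ) (A : MidVert n k) (hA : A.1.card = k + 1) :
    Matrix.toLin' (midAdj n k) v A = upf (extV k v) A.1 := by
  rw [toLin'_filter, upf]
  refine (Finset.sum_bij (fun (j : Fin n) (hj : j ∈ A.1) =>
    (⟨A.1.erase j, Or.inl (by rw [card_erase_of_mem hj, hA]; rfl)⟩ :
      MidVert n k)) ?_ ?_ ?_ ?_).symm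
  · intro j hj
    exact Finset.mem_filter.2 ⟨Finset.mem_univ _, Or.inr (Finset.erase_ssubset hj)⟩
  · intro j hj j' hj' hEq
    by_contra hne
    have h2 : A.1.erase j = A.1.erase j' := congrArg Subtype.val hEq
    have : j' ∈ A.1.erase j := Finset.mem_erase.2 ⟨fun h => hne h.symm, hj'⟩
    rw [h2] at this
    exact (Finset.notMem_erase j' A.1) this
  · intro B hB
    rcases (Finset.mem_filter.1 hB).2 with hAB | hBA
    · exfalso
      have := Finset.card_lt_card hAB
      rcases B.2 with h | h <;> omega
    · have hcardB : B.1.card = k := by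
        have := Finset.card_lt_card hBA
        rcases B.2 with h | h <;> omega
      have hsub : B.1 ⊆ A.1 := hBA.subset
      have hcard : (A.1 \ B.1).card = 1 := by
        rw [Finset.card_sdiff_of_subset hsub, hcardB, hA]; omega
      obtain ⟨j, hj⟩ := Finset.card_eq_one.1 hcard
      have hjA : j ∈ A.1 := by
        have : j ∈ A.1 \ B.1 := hj ▸ Finset.mem_singleton_self j
        exact (Finset.mem_sdiff.1 this).1
      refine ⟨j, hjA, ?_⟩
      apply Subtype.ext
      show A.1.erase j = B.1
      rw [Finset.erase_eq, ← hj]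
      exact Finset.sdiff_sdiff_eq_self hsub
  · intro j hj
    have hc : (A.1.erase j).card = k ∨ (A.1.erase j).card = k + 1 :=
      Or.inl (by rw [card_erase_of_mem hj, hA]; rfl)
    simp only [extV, dif_pos hc]
open Module in
theorem sum_finrank_le {ι V : Type*} [Fintype ι] [AddCommGroup V] [Module ℝ V]
    [FiniteDimensional ℝ V] (E : ι → Submodule ℝ V) (h : iSupIndep E) :
    ∑ i, Module.finrank ℝ (E i) ≤ Module.finrank ℝ V := by
  classical
  have key : ∀ s : Finset ι, ∑ i ∈ s, finrank ℝ (E i) ≤ finrank ℝ (⨆ i ∈ s, E i : Submodule ℝ V) := by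
    intro s
    induction s using Finset.induction_on with
    | empty => simp
    | insert _ _ ha ih =>
      rename_i a s
      have hdisj : Disjoint (E a) (⨆ i ∈ s, E i : Submodule ℝ V) := by
        refine (h a).mono_right ?_
        refine iSup₂_le fun i hi => ?_
        exact le_iSup₂ (f := fun (j : ι) (_ : j ≠ a) => E j) i (fun hia => ha (hia ▸ hi))
      have heq : finrank ℝ (E a) + finrank ℝ (⨆ i ∈ s, E i : Submodule ℝ V)
          = finrank ℝ ((E a ⊔ ⨆ i ∈ s, E i : Submodule ℝ V)) := by
        rw [← Submodule.finrank_sup_add_finrank_inf_eq, hdisj.eq_bot, finrank_bot, add_zero]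
      rw [Finset.sum_insert ha]
      calc finrank ℝ (E a) + ∑ i ∈ s, finrank ℝ (E i)
          ≤ finrank ℝ (E a) + finrank ℝ (⨆ i ∈ s, E i : Submodule ℝ V) :=
            Nat.add_le_add_left ih _
        _ = finrank ℝ ((E a ⊔ ⨆ i ∈ s, E i : Submodule ℝ V)) := heq
        _ = finrank ℝ (⨆ i ∈ insert a s, E i : Submodule ℝ V) := by
            rw [Finset.iSup_insert]
  exact (key Finset.univ).trans (Submodule.finrank_le _)

variable (k r : ℕ)

def Pm : Matrix (MidVert (2 * k + 1) k) (Lv (2 * k + 1) r) ℝ :=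
  fun A B => if B.1 ⊆ A.1 then 1 else 0

def Nm : Matrix (Lv (2 * k + 1) (r - 1)) (Lv (2 * k + 1) r) ℝ :=
  fun R B => if R.1 ⊆ B.1 then 1 else 0

lemma Pm_apply (h : Lv (2 * k + 1) r → ℝ) (A : MidVert (2 * k + 1) k) :
    (Pm k r).mulVec h A = ful r (ext r h) A.1 := by
  show ∑ B : Lv (2 * k + 1) r, Pm k r A B * h B = _
  rw [ful]
  exact sum_subtype_subset r h A.1

lemma Nm_apply (hr : 1 ≤ r) (h : Lv (2 * k + 1) r → ℝ) (R : Lv (2 * k + 1) (r - 1)) :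
    (Nm k r).mulVec h R = dn (ext r h) R.1 := by
  obtain ⟨r0, rfl⟩ : ∃ r0, r = r0 + 1 := ⟨r - 1, by omega⟩
  show ∑ B : Lv (2 * k + 1) (r0 + 1), Nm k (r0 + 1) R B * h B = _
  rw [dn]
  exact sum_subtype_supset r0 h R.1 (by simpa using R.2)

def Hsub : Submodule ℝ (Lv (2 * k + 1) r → ℝ) := LinearMap.ker (Nm k r).mulVecLin

def Wsub : Submodule ℝ (MidVert (2 * k + 1) k → ℝ) := (Hsub k r).map (Pm k r).mulVecLin

lemma mem_Hsub (hr : 1 ≤ r) (h : Lv (2 * k + 1) r → ℝ) :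
    h ∈ Hsub k r ↔
      ∀ R : Finset (Fin (2 * k + 1)), R.card = r - 1 → dn (ext r h) R = 0 := by
  rw [Hsub, LinearMap.mem_ker]
  constructor
  · intro h0 R hR
    have := congrFun h0 ⟨R, hR⟩
    rwa [Matrix.mulVecLin_apply, Nm_apply k r hr, Pi.zero_apply] at this
  · intro hall
    funext R
    rw [Matrix.mulVecLin_apply, Nm_apply k r hr, Pi.zero_apply]
    exact hall R.1 R.2
lemma card_compl_low {A : MidVert (2 * k + 1) k} (hA : A.1.card = k) :
    A.1ᶜ.card = k + 1 := by
  rw [Finset.card_compl, Fintype.card_fin, hA]; omega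

lemma W_le_eig (hr : 1 ≤ r) (hrk : r ≤ k) :
    Wsub k r ≤ Module.End.eigenspace (Matrix.toLin' (midAdj (2 * k + 1) k))
      ((k : ℝ) + 1 - r) := by
  rintro v ⟨h, hH, rfl⟩
  rw [Module.End.mem_eigenspace_iff]
  have hharm : ∀ R : Finset (Fin (2 * k + 1)), R.card = r - 1 → dn (ext r h) R = 0 :=
    (mem_Hsub k r hr h).1 hH
  funext A
  have hvA : ∀ B : MidVert (2 * k + 1) k,
      (Pm k r).mulVecLin h B = ful r (ext r h) B.1 := fun B => by
    rw [Matrix.mulVecLin_apply, Pm_apply]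
  rcases A.2 with hA | hA
  · rw [evalLow k _ A hA]
    have hcongr : dn (extV k ((Pm k r).mulVecLin h)) A.1 = dn (ful r (ext r h)) A.1 := by
      rw [dn, dn]
      refine Finset.sum_congr rfl fun i hi => ?_
      have hc : (insert i A.1).card = k ∨ (insert i A.1).card = k + 1 :=
        Or.inr (by rw [card_insert_of_notMem (by simpa using hi), hA])
      rw [extV, dif_pos hc]
      exact hvA ⟨insert i A.1, hc⟩
    rw [hcongr, dn_ful hr (ext r h) hharm A.1, card_compl_low k hA]
    rw [Pi.smul_apply, hvA A, smul_eq_mul]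
    push_cast
    ring
  · rw [evalHigh k _ A hA]
    have hcongr : upf (extV k ((Pm k r).mulVecLin h)) A.1 = upf (ful r (ext r h)) A.1 := by
      rw [upf, upf]
      refine Finset.sum_congr rfl fun j hj => ?_
      have hc : (A.1.erase j).card = k ∨ (A.1.erase j).card = k + 1 :=
        Or.inl (by rw [card_erase_of_mem hj, hA]; rfl)
      rw [extV, dif_pos hc]
      exact hvA ⟨A.1.erase j, hc⟩
    rw [hcongr, up_ful r (ext r h) A.1, hA]
    rw [Pi.smul_apply, hvA A, smul_eq_mul]
    push_cast
    ring

def sgn (n k : ℕ) : (MidVert n k → ℝ) →ₗ[ℝ] (MidVert n k → ℝ) where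
  toFun v := fun A => if A.1.card = k then v A else -v A
  map_add' u v := by
    funext A
    by_cases h : A.1.card = k <;> simp [h] <;> ring
  map_smul' c v := by
    funext A
    by_cases h : A.1.card = k <;> simp [h] <;> ring

lemma sgn_eig {n k : ℕ} {μ : ℝ} {v : MidVert n k → ℝ}
    (hv : v ∈ Module.End.eigenspace (Matrix.toLin' (midAdj n k)) μ) :
    sgn n k v ∈ Module.End.eigenspace (Matrix.toLin' (midAdj n k)) (-μ) := by
  rw [Module.End.mem_eigenspace_iff] at hv ⊢
  funext A
  rcases A.2 with hA | hA
  · rw [evalLow k _ A hA]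
    have hcongr : dn (extV k (sgn n k v)) A.1 = - dn (extV k v) A.1 := by
      rw [dn, dn, ← Finset.sum_neg_distrib]
      refine Finset.sum_congr rfl fun i hi => ?_
      have hcard : (insert i A.1).card = k + 1 := by
        rw [card_insert_of_notMem (by simpa using hi), hA]
      have hc : (insert i A.1).card = k ∨ (insert i A.1).card = k + 1 := Or.inr hcard
      rw [extV, extV, dif_pos hc, dif_pos hc]
      show (if (⟨insert i A.1, hc⟩ : MidVert n k).1.card = k then _ else _) = _
      rw [if_neg (by simp only [hcard]; omega)]
    rw [hcongr, ← evalLow k v A hA, hv]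
    have hAk : (sgn n k v) A = v A := by
      show (if A.1.card = k then v A else -v A) = v A
      rw [if_pos hA]
    rw [Pi.smul_apply, Pi.smul_apply, hAk, smul_eq_mul, smul_eq_mul]
    ring
  · have hAk : A.1.card ≠ k := by omega
    rw [evalHigh k _ A hA]
    have hcongr : upf (extV k (sgn n k v)) A.1 = upf (extV k v) A.1 := by
      rw [upf, upf]
      refine Finset.sum_congr rfl fun j hj => ?_
      have hcard : (A.1.erase j).card = k := by rw [card_erase_of_mem hj, hA]; rfl
      have hc : (A.1.erase j).card = k ∨ (A.1.erase j).card = k + 1 := Or.inl hcard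
      rw [extV, extV, dif_pos hc, dif_pos hc]
      show (if (⟨A.1.erase j, hc⟩ : MidVert n k).1.card = k then _ else _) = _
      rw [if_pos hcard]
    rw [hcongr, ← evalHigh k v A hA, hv]
    have hAk' : (sgn n k v) A = -v A := by
      show (if A.1.card = k then v A else -v A) = -v A
      rw [if_neg hAk]
    rw [Pi.smul_apply, Pi.smul_apply, hAk', smul_eq_mul, smul_eq_mul]
    ring

lemma one_eig (k : ℕ) :
    (fun _ => (1 : ℝ)) ∈ Module.End.eigenspace
      (Matrix.toLin' (midAdj (2 * k + 1) k)) ((k : ℝ) + 1) := by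
  rw [Module.End.mem_eigenspace_iff]
  funext A
  have hone : ∀ B : Finset (Fin (2 * k + 1)), B.card = k ∨ B.card = k + 1 →
      extV k (fun _ => (1 : ℝ)) B = 1 := fun B hB => by rw [extV, dif_pos hB]
  rcases A.2 with hA | hA
  · rw [evalLow k _ A hA, dn]
    rw [Finset.sum_congr rfl fun i hi => hone _ (Or.inr (by
      rw [card_insert_of_notMem (by simpa using hi), hA]))]
    rw [Finset.sum_const, card_compl_low k hA, nsmul_eq_mul, Pi.smul_apply, smul_eq_mul]
    push_cast
    ring
  · rw [evalHigh k _ A hA, upf]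
    rw [Finset.sum_congr rfl fun j hj => hone _ (Or.inl (by
      rw [card_erase_of_mem hj, hA]; rfl))]
    rw [Finset.sum_const, hA, nsmul_eq_mul, Pi.smul_apply, smul_eq_mul]
    push_cast
    ring
lemma card_Lv (n s : ℕ) : Fintype.card (Lv n s) = n.choose s := by
  rw [Fintype.card_finset_len, Fintype.card_fin]

lemma NmT_inj (hr : 1 ≤ r) (hrk : r ≤ k) :
    Function.Injective ((Nm k r).transpose.mulVecLin) := by
  rw [← LinearMap.ker_eq_bot, Submodule.eq_bot_iff]
  intro h h0
  rw [LinearMap.mem_ker] at h0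
  have hB : ∀ C : Finset (Fin (2 * k + 1)), C.card = r →
      ful (r - 1) (ext (r - 1) h) C = 0 := by
    intro C hC
    have := congrFun h0 ⟨C, hC⟩
    rw [Matrix.mulVecLin_apply, Pi.zero_apply] at this
    have heq : (Nm k r).transpose.mulVec h ⟨C, hC⟩
        = ∑ R : Lv (2 * k + 1) (r - 1),
            (if R.1 ⊆ C then (1 : ℝ) else 0) * h R := rfl
    rw [heq, sum_subtype_subset (r - 1) h C] at this
    exact this
  have hful : ∀ B : Finset (Fin (2 * k + 1)), B.card = r - 1 →
      ext (r - 1) h B = 0 := by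
    refine ful_inj (r - 1) 1 (ext (r - 1) h) (by omega) ?_
    intro A hA
    exact hB A (by omega)
  funext R
  have := hful R.1 R.2
  rwa [ext_apply] at this
  
lemma finrank_Hsub (hr : 1 ≤ r) (hrk : r ≤ k) :
    Module.finrank ℝ (Hsub k r) = (2 * k + 1).choose r - (2 * k + 1).choose (r - 1) := by
  have hrn := LinearMap.finrank_range_add_finrank_ker ((Nm k r).mulVecLin)
  have hdom : Module.finrank ℝ (Lv (2 * k + 1) r → ℝ) = (2 * k + 1).choose r := by
    rw [Module.finrank_fintype_fun_eq_card, card_Lv]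
  have hrank : Module.finrank ℝ (LinearMap.range (Nm k r).mulVecLin)
      = (2 * k + 1).choose (r - 1) := by
    have h1 : Module.finrank ℝ (LinearMap.range (Nm k r).mulVecLin) = (Nm k r).rank := rfl
    have h2 : (Nm k r).transpose.rank = (2 * k + 1).choose (r - 1) := by
      show Module.finrank ℝ (LinearMap.range ((Nm k r).transpose).mulVecLin)
          = (2 * k + 1).choose (r - 1)
      rw [LinearMap.finrank_range_of_inj (NmT_inj k r hr hrk),
        Module.finrank_fintype_fun_eq_card, card_Lv]
    rw [h1, ← Matrix.rank_transpose, h2]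
  rw [hdom, hrank] at hrn
  have : Module.finrank ℝ (Hsub k r)
      = Module.finrank ℝ (LinearMap.ker (Nm k r).mulVecLin) := rfl
  omega

lemma Pm_inj (hr : 1 ≤ r) (hrk : r ≤ k) :
    Function.Injective ((Pm k r).mulVecLin) := by
  rw [← LinearMap.ker_eq_bot, Submodule.eq_bot_iff]
  intro h h0
  rw [LinearMap.mem_ker] at h0
  have hB : ∀ C : Finset (Fin (2 * k + 1)), C.card = k →
      ful r (ext r h) C = 0 := by
    intro C hC
    have := congrFun h0 ⟨C, Or.inl hC⟩
    rwa [Matrix.mulVecLin_apply, Pm_apply, Pi.zero_apply] at this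
  have hful : ∀ B : Finset (Fin (2 * k + 1)), B.card = r → ext r h B = 0 := by
    refine ful_inj r (k - r) (ext r h) (by omega) ?_
    intro A hA
    exact hB A (by omega)
  funext R
  have := hful R.1 R.2
  rwa [ext_apply] at this

lemma finrank_Wsub (hr : 1 ≤ r) (hrk : r ≤ k) :
    Module.finrank ℝ (Wsub k r) = (2 * k + 1).choose r - (2 * k + 1).choose (r - 1) := by
  have hcomp : Wsub k r
      = LinearMap.range ((Pm k r).mulVecLin ∘ₗ (Hsub k r).subtype) := by
    rw [LinearMap.range_comp, Submodule.range_subtype, Wsub]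
  rw [hcomp, LinearMap.finrank_range_of_inj (by
    rw [LinearMap.coe_comp]
    exact (Pm_inj k r hr hrk).comp (Submodule.injective_subtype _)),
    finrank_Hsub k r hr hrk]

lemma card_MidVert (k : ℕ) :
    Fintype.card (MidVert (2 * k + 1) k) = 2 * (2 * k + 1).choose k := by
  rw [Fintype.card_subtype]
  have hsplit : (univ : Finset (Finset (Fin (2 * k + 1)))).filter
        (fun A => A.card = k ∨ A.card = k + 1)
      = (univ.filter (fun A => A.card = k)) ∪ (univ.filter (fun A => A.card = k + 1)) := by
    rw [← Finset.filter_or]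
  have hdisj : Disjoint
      ((univ : Finset (Finset (Fin (2 * k + 1)))).filter (fun A => A.card = k))
      (univ.filter (fun A => A.card = k + 1)) := by
    rw [Finset.disjoint_left]
    intro A hA hA'
    rw [Finset.mem_filter] at hA hA'
    omega
  have hcard : ∀ s : ℕ, ((univ : Finset (Finset (Fin (2 * k + 1)))).filter
      (fun A => A.card = s)).card = (2 * k + 1).choose s := by
    intro s
    rw [← Fintype.card_subtype, card_Lv]
  rw [hsplit, Finset.card_union_of_disjoint hdisj, hcard, hcard]
  have : (2 * k + 1).choose (k + 1) = (2 * k + 1).choose k := by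
    have h1 : (2 * k + 1).choose (2 * k + 1 - (k + 1)) = (2 * k + 1).choose (k + 1) :=
      Nat.choose_symm (by omega)
    rw [show 2 * k + 1 - (k + 1) = k by omega] at h1
    omega
  omega

lemma telescope (k : ℕ) : ∀ m : ℕ, m ≤ k →
    ∑ s ∈ Finset.range (m + 1),
      (if s = 0 then 1 else (2 * k + 1).choose s - (2 * k + 1).choose (s - 1))
      = (2 * k + 1).choose m := by
  intro m
  induction m with
  | zero => simp
  | succ m ih =>
    intro hm
    rw [Finset.sum_range_succ, ih (by omega), if_neg (by omega)]
    have hmono : (2 * k + 1).choose m ≤ (2 * k + 1).choose (m + 1) :=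
      Nat.choose_le_succ_of_lt_half_left (by omega)
    simp only [Nat.add_sub_cancel]
    omega
lemma sgn_invol (n k : ℕ) : Function.Involutive (sgn n k) := by
  intro v
  funext A
  show (if A.1.card = k then (sgn n k v) A else -((sgn n k v) A)) = v A
  show (if A.1.card = k then (if A.1.card = k then v A else -v A)
    else -(if A.1.card = k then v A else -v A)) = v A
  by_cases h : A.1.card = k <;> simp [h]

noncomputable def sgnEquiv (n k : ℕ) : (MidVert n k → ℝ) ≃ₗ[ℝ] (MidVert n k → ℝ) :=
  LinearEquiv.ofInvolutive (sgn n k) (sgn_invol n k)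

lemma neg_finrank_le {n k : ℕ} (μ0 : ℝ) (W : Submodule ℝ (MidVert n k → ℝ))
    (hW : W ≤ Module.End.eigenspace (Matrix.toLin' (midAdj n k)) μ0) :
    Module.finrank ℝ W ≤ Module.finrank ℝ
      (Module.End.eigenspace (Matrix.toLin' (midAdj n k)) (-μ0)) := by
  have hmap : W.map ((sgnEquiv n k : (MidVert n k → ℝ) →ₗ[ℝ] (MidVert n k → ℝ)))
      ≤ Module.End.eigenspace (Matrix.toLin' (midAdj n k)) (-μ0) := by
    rintro v ⟨u, hu, rfl⟩
    exact sgn_eig (hW hu)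
  calc Module.finrank ℝ W
      = Module.finrank ℝ (W.map ((sgnEquiv n k :
          (MidVert n k → ℝ) →ₗ[ℝ] (MidVert n k → ℝ)))) :=
        (LinearEquiv.finrank_map_eq (sgnEquiv n k) W).symm
    _ ≤ _ := Submodule.finrank_mono hmap

def muv (k : ℕ) (p : Fin (k + 1) × Bool) : ℝ :=
  if p.2 then (k : ℝ) + 1 - p.1.1 else -((k : ℝ) + 1 - p.1.1)

noncomputable def Ev (k : ℕ) (p : Fin (k + 1) × Bool) : Submodule ℝ (MidVert (2 * k + 1) k → ℝ) :=
  Module.End.eigenspace (Matrix.toLin' (midAdj (2 * k + 1) k)) (muv k p)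

def dv (k : ℕ) (p : Fin (k + 1) × Bool) : ℕ :=
  if p.1.1 = 0 then 1 else (2 * k + 1).choose p.1.1 - (2 * k + 1).choose (p.1.1 - 1)

lemma muv_inj (k : ℕ) : Function.Injective (muv k) := by
  rintro ⟨⟨a, ha⟩, b⟩ ⟨⟨a', ha'⟩, b'⟩ h
  have haR : (a : ℝ) ≤ k := by exact_mod_cast Nat.lt_succ_iff.1 ha
  have haR' : (a' : ℝ) ≤ k := by exact_mod_cast Nat.lt_succ_iff.1 ha'
  simp only [muv] at h
  cases b <;> cases b' <;> simp only [if_true, if_false, Bool.false_eq_true] at h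
  · have : (a : ℝ) = a' := by linarith
    have : a = a' := by exact_mod_cast this
    subst this; rfl
  · exfalso; linarith
  · exfalso; linarith
  · have : (a : ℝ) = a' := by linarith
    have : a = a' := by exact_mod_cast this
    subst this; rfl

lemma one_ne_zero' (k : ℕ) : (fun _ => (1 : ℝ)) ≠ (0 : MidVert (2 * k + 1) k → ℝ) := by
  have hNE : Nonempty (MidVert (2 * k + 1) k) := by
    obtain ⟨t, _, ht⟩ := Finset.exists_subset_card_eq (s := (univ : Finset (Fin (2 * k + 1)))) (n := k)
      (by rw [Finset.card_univ, Fintype.card_fin]; omega)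
    exact ⟨⟨t, Or.inl ht⟩⟩
  intro h
  have := congrFun h hNE.some
  simp at this

lemma dv_le (k : ℕ) (hk : 1 ≤ k) (p : Fin (k + 1) × Bool) :
    dv k p ≤ Module.finrank ℝ (Ev k p) := by
  obtain ⟨s, b⟩ := p
  -- positive-eigenvalue witness subspace
  have hW : ∃ W : Submodule ℝ (MidVert (2 * k + 1) k → ℝ),
      Module.finrank ℝ W = dv k (s, b) ∧
      W ≤ Module.End.eigenspace (Matrix.toLin' (midAdj (2 * k + 1) k))
        ((k : ℝ) + 1 - s.1) := by
    by_cases hs : s.1 = 0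
    · refine ⟨Submodule.span ℝ {fun _ => (1 : ℝ)}, ?_, ?_⟩
      · rw [finrank_span_singleton (one_ne_zero' k)]
        simp [dv, hs]
      · rw [Submodule.span_le, Set.singleton_subset_iff, hs]
        have := one_eig k
        simpa using this
    · refine ⟨Wsub k s.1, ?_, ?_⟩
      · rw [finrank_Wsub k s.1 (by omega) (by omega : s.1 ≤ k)]
        simp [dv, hs]
      · exact W_le_eig k s.1 (by omega) (by omega)
  obtain ⟨W, hWrank, hWle⟩ := hW
  cases b
  · -- negative eigenvalue
    have : Ev k (s, false) = Module.End.eigenspace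
        (Matrix.toLin' (midAdj (2 * k + 1) k)) (-((k : ℝ) + 1 - s.1)) := by
      simp [Ev, muv]
    rw [this, ← hWrank]
    · exact neg_finrank_le _ W hWle
  · have : Ev k (s, true) = Module.End.eigenspace
        (Matrix.toLin' (midAdj (2 * k + 1) k)) ((k : ℝ) + 1 - s.1) := by
      simp [Ev, muv]
    rw [this, ← hWrank]
    · exact Submodule.finrank_mono hWle

lemma sum_dv (k : ℕ) : ∑ p : Fin (k + 1) × Bool, dv k p = 2 * (2 * k + 1).choose k := by
  rw [Fintype.sum_prod_type]
  have hb : ∀ s : Fin (k + 1), ∑ b : Bool, dv k (s, b) = 2 * dv k (s, true) := by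
    intro s
    rw [Fintype.sum_bool]
    have : dv k (s, true) = dv k (s, false) := rfl
    omega
  rw [Finset.sum_congr rfl fun s _ => hb s, ← Finset.mul_sum]
  congr 1
  have := telescope k k le_rfl
  rw [← this, ← Fin.sum_univ_eq_sum_range (fun i =>
    if i = 0 then 1 else (2 * k + 1).choose i - (2 * k + 1).choose (i - 1)) (k + 1)]
  rfl

lemma finrank_total (k : ℕ) :
    Module.finrank ℝ (MidVert (2 * k + 1) k → ℝ) = 2 * (2 * k + 1).choose k := by
  rw [Module.finrank_fintype_fun_eq_card, card_MidVert]

lemma finrank_Ev (k : ℕ) (hk : 1 ≤ k) (p : Fin (k + 1) × Bool) :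
    Module.finrank ℝ (Ev k p) = dv k p := by
  have hindep : iSupIndep (Ev k) :=
    (Module.End.eigenspaces_iSupIndep (Matrix.toLin' (midAdj (2 * k + 1) k))).comp (muv_inj k)
  have hle := sum_finrank_le (Ev k) hindep
  rw [finrank_total] at hle
  have hge : ∀ q : Fin (k + 1) × Bool, dv k q ≤ Module.finrank ℝ (Ev k q) := dv_le k hk
  by_contra hne
  have hlt : dv k p < Module.finrank ℝ (Ev k p) :=
    lt_of_le_of_ne (hge p) (fun h => hne h.symm)
  have hstrict : ∑ q : Fin (k + 1) × Bool, dv k q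
      < ∑ q : Fin (k + 1) × Bool, Module.finrank ℝ (Ev k q) :=
    Finset.sum_lt_sum (fun q _ => hge q) ⟨p, Finset.mem_univ p, hlt⟩
  rw [sum_dv] at hstrict
  omega
end MC

/-- Let `n = 2k+1` with `k ≥ 1` and `1 ≤ r ≤ k`. The eigenspace of the adjacency
matrix of the middle-cube `M_n` for the eigenvalue `k+1−r` is exactly the set of
vectors `(f(A))_A` indexed by the vertices `A` of `M_n`, where
`f(A) = ∑_{B ⊆ A, |B| = r} g(B)` and `g` ranges over all assignments of reals to the
`r`-subsets of `S` satisfying: for every `(r−1)`-subset `R` of `S`,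
`∑_{i ∈ S∖R} g(R ∪ {i}) = 0`. In particular, this eigenspace has dimension
`C(n, r) − C(n, r−1)`. -/
theorem middle_cube_eigenspace (k r : ℕ) (hk : 1 ≤ k) (hr : 1 ≤ r) (hrk : r ≤ k) :
    (Module.End.eigenspace (Matrix.toLin' (midAdj (2 * k + 1) k)) ((k : ℝ) + 1 - r)
        : Set (MidVert (2 * k + 1) k → ℝ)) =
      {v | ∃ g : Finset (Fin (2 * k + 1)) → ℝ,
        (∀ R : Finset (Fin (2 * k + 1)), R.card = r - 1 →
          ∑ i ∈ Rᶜ, g (insert i R) = 0) ∧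
        ∀ A : MidVert (2 * k + 1) k, v A = ∑ B ∈ A.1.powersetCard r, g B} ∧
    Module.finrank ℝ
        (Module.End.eigenspace (Matrix.toLin' (midAdj (2 * k + 1) k))
          ((k : ℝ) + 1 - r)) =
      (2 * k + 1).choose r - (2 * k + 1).choose (r - 1) := by
  classical
  have hp0 : r < k + 1 := by omega
  have hr0 : ¬ (r = 0) := by omega
  have hμ : MC.muv k (⟨r, hp0⟩, true) = (k : ℝ) + 1 - r := by simp [MC.muv]
  have hEv : MC.Ev k (⟨r, hp0⟩, true)
      = Module.End.eigenspace (Matrix.toLin' (midAdj (2 * k + 1) k))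
          ((k : ℝ) + 1 - r) := by
    rw [MC.Ev, hμ]
  have hdv : MC.dv k (⟨r, hp0⟩, true)
      = (2 * k + 1).choose r - (2 * k + 1).choose (r - 1) := by
    simp [MC.dv, hr0]
  have hdim : Module.finrank ℝ
      (Module.End.eigenspace (Matrix.toLin' (midAdj (2 * k + 1) k)) ((k : ℝ) + 1 - r))
      = (2 * k + 1).choose r - (2 * k + 1).choose (r - 1) := by
    rw [← hEv, MC.finrank_Ev k hk, hdv]
  have hWrank := MC.finrank_Wsub k r hr hrk
  have hWle := MC.W_le_eig k r hr hrk
  have hEW : Module.End.eigenspace (Matrix.toLin' (midAdj (2 * k + 1) k))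
      ((k : ℝ) + 1 - r) = MC.Wsub k r :=
    (Submodule.eq_of_le_of_finrank_le hWle (by rw [hdim, hWrank])).symm
  refine ⟨?_, hdim⟩
  rw [hEW]
  ext v
  simp only [SetLike.mem_coe, MC.Wsub, Submodule.mem_map, Set.mem_setOf_eq]
  constructor
  · rintro ⟨h, hH, rfl⟩
    refine ⟨MC.ext r h, ?_, ?_⟩
    · intro R hR
      exact (MC.mem_Hsub k r hr h).1 hH R hR
    · intro A
      rw [Matrix.mulVecLin_apply, MC.Pm_apply]
      rfl
  · rintro ⟨g, hg, hv⟩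
    refine ⟨fun B => g B.1, ?_, ?_⟩
    · rw [MC.mem_Hsub k r hr]
      intro R hR
      have heq : MC.dn (MC.ext r fun B => g B.1) R = MC.dn g R := by
        rw [MC.dn, MC.dn]
        refine Finset.sum_congr rfl fun i hi => ?_
        have hc : (insert i R).card = r := by
          rw [card_insert_of_notMem (by simpa using hi), hR]; omega
        rw [MC.ext, dif_pos hc]
      rw [heq]
      exact hg R hR
    · funext A
      rw [Matrix.mulVecLin_apply, MC.Pm_apply, MC.ful, hv A]
      refine Finset.sum_congr rfl fun B hB => ?_
      have hc : B.card = r := (mem_powersetCard.1 hB).2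
      rw [MC.ext, dif_pos hc]
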